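/- Fix integers N ≥ 1 and 0 ≤ ℓ ≤ N−1 and a real β > 0, and let R_{Nℓ}(ρ) = e^{−ρ/2} ρ^ℓ · Σ_{t=0}^{N−ℓ−1} (−1)^t · binom(N+ℓ, N−ℓ−1−t) · ρ^t / t!. Then for every p ∈ ℝ the transform ψ_{Nℓ}(p) = ∫₀^∞ e^{i p r} R_{Nℓ}(2β r) r dr admits the rational closed form (equivalent to the Lombardi–Ogilvie wave functions): ψ_{Nℓ}(p) = Σ_{t=0}^{N−ℓ−1} (−1)^t · binom(N+ℓ, N−ℓ−1−t) · ((ℓ+t+1)!/t!) · (2β)^{ℓ+t} · (β − i p)^{−(ℓ+t+2)}, where i is the imaginary unit. -/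

import Mathlib

open MeasureTheory Complex Real Nat
open Filter

lemma aux_integrable {c : ℂ} (hc : 0 < c.re) (k : ℕ) :
    IntegrableOn (fun r : ℝ => (r : ℂ) ^ k * Complex.exp (-(c * r))) (Set.Ioi 0) := by
  have hg : IntegrableOn (fun x : ℝ => x ^ (k : ℝ) * Real.exp (-c.re * x ^ (1 : ℝ)))
      (Set.Ioi 0) :=
    integrableOn_rpow_mul_exp_neg_mul_rpow
      (lt_of_lt_of_le neg_one_lt_zero (Nat.cast_nonneg k)) zero_lt_one hc
  refine Integrable.mono' hg ?_ ?_
  · apply Continuous.aestronglyMeasurable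
    continuity
  · filter_upwards [ae_restrict_mem measurableSet_Ioi] with r hr
    rw [Set.mem_Ioi] at hr
    rw [norm_mul, norm_pow, Complex.norm_exp]
    simp only [Complex.neg_re, Complex.mul_re, Complex.ofReal_re, Complex.ofReal_im, mul_zero,
      sub_zero]
    rw [Real.rpow_one, Real.rpow_natCast, Complex.norm_real, Real.norm_eq_abs, abs_of_pos hr]
    apply le_of_eq
    ring

lemma aux_tendsto {c : ℂ} (hc : 0 < c.re) (k : ℕ) :
    Tendsto (fun r : ℝ => (r : ℂ) ^ k * Complex.exp (-(c * r))) atTop (nhds 0) := by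
  rw [tendsto_zero_iff_norm_tendsto_zero]
  have h := tendsto_rpow_mul_exp_neg_mul_atTop_nhds_zero k c.re hc
  refine h.congr' ?_
  filter_upwards [eventually_gt_atTop (0:ℝ)] with r hr
  rw [norm_mul, norm_pow, Complex.norm_exp]
  simp only [Complex.neg_re, Complex.mul_re, Complex.ofReal_re, Complex.ofReal_im, mul_zero,
    sub_zero]
  rw [Real.rpow_natCast, Complex.norm_real, Real.norm_eq_abs, abs_of_pos hr]
  ring

lemma aux_key {c : ℂ} (hc : 0 < c.re) (n : ℕ) :
    ∫ r in Set.Ioi (0:ℝ), (r : ℂ) ^ n * Complex.exp (-(c * r)) = n ! / c ^ (n + 1) := by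
  have hc0 : c ≠ 0 := fun h => by simp [h] at hc
  induction n with
  | zero =>
    have hderiv : ∀ x ∈ Set.Ici (0:ℝ),
        HasDerivAt (fun r : ℝ => -Complex.exp (-(c * r)) / c)
          ((x : ℂ) ^ 0 * Complex.exp (-(c * x))) x := by
      intro x _
      have h1 : HasDerivAt (fun z : ℂ => -Complex.exp (-(c * z)) / c)
          (Complex.exp (-(c * x))) (x : ℂ) := by
        have h2 : HasDerivAt (fun z : ℂ => -(c * z)) (-c) (x : ℂ) := by
          exact (((hasDerivAt_id (x : ℂ)).const_mul c).neg).congr_deriv (by simp)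
        have := (Complex.hasDerivAt_exp (-(c * (x:ℂ)))).comp (x:ℂ) h2
        have := (this.neg).div_const c
        refine this.congr_deriv ?_
        field_simp
      simpa using h1.comp_ofReal
    have := integral_Ioi_of_hasDerivAt_of_tendsto' hderiv (aux_integrable hc 0)
      (by simpa using (aux_tendsto hc 0).neg.div_const c)
    rw [this]
    simp
    field_simp
  | succ n ih =>
    have hderiv : ∀ x ∈ Set.Ici (0:ℝ),
        HasDerivAt (fun r : ℝ => -(r : ℂ) ^ (n+1) * Complex.exp (-(c * r)) / c)
          ((x : ℂ) ^ (n+1) * Complex.exp (-(c * x))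
            - ((n:ℂ)+1)/c * ((x : ℂ) ^ n * Complex.exp (-(c * x)))) x := by
      intro x _
      have h2 : HasDerivAt (fun z : ℂ => -(c * z)) (-c) (x : ℂ) := by
        exact (((hasDerivAt_id (x : ℂ)).const_mul c).neg).congr_deriv (by simp)
      have hexp : HasDerivAt (fun z : ℂ => Complex.exp (-(c * z)))
          (Complex.exp (-(c * (x:ℂ))) * -c) (x:ℂ) := h2.cexp
      have hpow := hasDerivAt_pow (n+1) (x:ℂ)
      have h := ((hpow.mul hexp).neg.div_const c).comp_ofReal
      convert h using 1
      · funext y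
        simp only [Pi.neg_apply, Pi.mul_apply]
        ring
      rw [Nat.add_sub_cancel]
      push_cast
      field_simp
      push_cast
      ring
    have hint : IntegrableOn (fun x : ℝ => (x : ℂ) ^ (n+1) * Complex.exp (-(c * x))
        - ((n:ℂ)+1)/c * ((x : ℂ) ^ n * Complex.exp (-(c * x)))) (Set.Ioi 0) :=
      (aux_integrable hc (n+1)).sub ((aux_integrable hc n).const_mul _)
    have htend : Tendsto (fun r : ℝ => -(r : ℂ) ^ (n+1) * Complex.exp (-(c * r)) / c)
        atTop (nhds 0) := by
      simpa using (aux_tendsto hc (n+1)).neg.div_const c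
    have h := integral_Ioi_of_hasDerivAt_of_tendsto' hderiv hint htend
    rw [integral_sub (aux_integrable hc (n+1)) ((aux_integrable hc n).const_mul _),
      integral_const_mul, ih] at h
    simp only [Complex.ofReal_zero, ne_eq, zero_pow, Nat.succ_ne_zero, not_false_iff] at h
    have h' : ∫ r in Set.Ioi (0:ℝ), (r : ℂ) ^ (n+1) * Complex.exp (-(c * r))
        = ((n:ℂ)+1)/c * ((n)! / c ^ (n+1)) := by
      have := h
      linear_combination this
    rw [h', Nat.factorial_succ]
    push_cast
    rw [_root_.div_mul_div_comm]
    rw [show c * c ^ (n+1) = c ^ (n+1+1) by ring]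


/-- rational (Lombardi–Ogilvie) closed form of the radial momentum-space
hydrogen wave functions. With `R_{Nℓ}(ρ) = e^{−ρ/2} ρ^ℓ Σ_t (−1)^t C(N+ℓ, N−ℓ−1−t) ρ^t/t!`,
the transform `ψ_{Nℓ}(p) = ∫₀^∞ e^{ipr} R_{Nℓ}(2βr) r dr` equals
`Σ_t (−1)^t C(N+ℓ, N−ℓ−1−t) ((ℓ+t+1)!/t!) (2β)^{ℓ+t} (β − ip)^{−(ℓ+t+2)}`. -/
theorem hydrogen_radial_momentum_wavefunction_rational
    (N ℓ : ℕ) (hN : 1 ≤ N) (hℓ : ℓ + 1 ≤ N) (β : ℝ) (hβ : 0 < β)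
    (R : ℝ → ℝ)
    (hR : ∀ ρ : ℝ, R ρ = Real.exp (-ρ / 2) * ρ ^ ℓ *
      ∑ t ∈ Finset.range (N - ℓ),
        (-1 : ℝ) ^ t * ((N + ℓ).choose (N - ℓ - 1 - t) : ℝ) * ρ ^ t / (t ! : ℝ))
    (p : ℝ) :
    (∫ r in Set.Ioi (0 : ℝ),
        Complex.exp (Complex.I * p * r) * ((R (2 * β * r) : ℝ) : ℂ) * (r : ℂ))
      = ∑ t ∈ Finset.range (N - ℓ),
          (-1 : ℂ) ^ t * ((N + ℓ).choose (N - ℓ - 1 - t) : ℂ)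
            * (((ℓ + t + 1)! : ℂ) / (t ! : ℂ)) * ((2 * β : ℝ) : ℂ) ^ (ℓ + t)
            * ((β : ℂ) - Complex.I * (p : ℂ)) ^ (-(ℓ + t + 2 : ℤ)) := by
  set c : ℂ := (β : ℂ) - Complex.I * p with hc
  have hcre : 0 < c.re := by
    simp [hc, Complex.sub_re, Complex.mul_re]
    exact hβ
  have hc0 : c ≠ 0 := fun h => by simp [h] at hcre
  have hpt : ∀ r ∈ Set.Ioi (0:ℝ),
      Complex.exp (Complex.I * p * r) * ((R (2 * β * r) : ℝ) : ℂ) * (r : ℂ)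
        = ∑ t ∈ Finset.range (N - ℓ),
            ((-1 : ℂ) ^ t * ((N + ℓ).choose (N - ℓ - 1 - t) : ℂ)
              * ((2 * β : ℂ) ^ (ℓ + t) / (t ! : ℂ)))
              * ((r : ℂ) ^ (ℓ + t + 1) * Complex.exp (-(c * r))) := by
    intro r _
    rw [hR (2 * β * r)]
    have hexp : Complex.exp (Complex.I * p * r)
        * Complex.exp (-(2 * (β:ℂ) * r) / 2) = Complex.exp (-(c * r)) := by
      rw [← Complex.exp_add]
      congr 1
      rw [hc]
      ring
    push_cast
    rw [show Complex.exp (Complex.I * p * r)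
        * (Complex.exp (-(2 * (β:ℂ) * r) / 2) * (2 * (β:ℂ) * r) ^ ℓ
          * ∑ t ∈ Finset.range (N - ℓ), (-1 : ℂ) ^ t * ((N + ℓ).choose (N - ℓ - 1 - t) : ℂ)
              * (2 * (β:ℂ) * r) ^ t / (t ! : ℂ)) * (r : ℂ)
      = (Complex.exp (Complex.I * p * r) * Complex.exp (-(2 * (β:ℂ) * r) / 2))
        * ((2 * (β:ℂ) * r) ^ ℓ
          * (∑ t ∈ Finset.range (N - ℓ), (-1 : ℂ) ^ t * ((N + ℓ).choose (N - ℓ - 1 - t) : ℂ)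
              * (2 * (β:ℂ) * r) ^ t / (t ! : ℂ)) * (r : ℂ)) from by ring]
    rw [hexp, Finset.mul_sum, Finset.sum_mul, Finset.mul_sum]
    refine Finset.sum_congr rfl fun t _ => ?_
    ring
  rw [setIntegral_congr_fun measurableSet_Ioi hpt]
  rw [integral_finset_sum _ fun t _ => ((aux_integrable hcre (ℓ + t + 1)).const_mul _)]
  refine Finset.sum_congr rfl fun t _ => ?_
  rw [integral_const_mul, aux_key hcre (ℓ + t + 1)]
  rw [show (-(ℓ + t + 2 : ℤ)) = -(((ℓ + t + 2 : ℕ) : ℤ)) from by push_cast; ring,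
    zpow_neg, zpow_natCast]
  push_cast
  rw [show ℓ + t + 1 + 1 = ℓ + t + 2 from rfl]
  field_simp
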